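/- Let G be a finite weighted directed acyclic graph with edge weights in a commutative ring R. For vertices a, b, let P(a,b) be the sum over all directed paths p from a to b of the product of edge weights of p. For k-tuples a = (a₁,…,a_k), b = (b₁,…,b_k) of vertices, let P_k(a,b) be the sum of Π_i wt(p_i) over all families (p₁,…,p_k) where p_i is a path from a_i to b_i and the paths are pairwise vertex-disjoint. Then Σ_{σ ∈ S_k} sgn(σ) P_k(a, b_σ) = det(P(a_i, b_j))_{i,j=1}^k, where b_σ = (b_{σ(1)},…,b_{σ(k)}). -/

import Mathlib

/-- `IsWalk src tgt l a b` means the list of edges `l` forms a directed walk from `a` to `b`. -/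
def IsWalk {V E : Type*} (src tgt : E → V) : List E → V → V → Prop
  | [], a, b => a = b
  | e :: l, a, b => src e = a ∧ IsWalk src tgt l (tgt e) b

/-- The list of vertices visited by a walk starting at `a` with edge list `l`. -/
def walkVerts {V E : Type*} (tgt : E → V) (a : V) (l : List E) : List V :=
  a :: l.map tgt

/-- The weight of a walk: the product of the weights of its edges. -/
def walkWt {E R : Type*} [CommRing R] (wt : E → R) (l : List E) : R :=
  (l.map wt).prod

/-- A directed path from `a` to `b`: a walk with no repeated vertices. -/
def DPath {V E : Type*} (src tgt : E → V) (a b : V) : Type _ :=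
  {l : List E // IsWalk src tgt l a b ∧ (walkVerts tgt a l).Nodup}

/-- `P(a,b)`: the sum of the weights of all directed paths from `a` to `b`. -/
noncomputable def pathSum {V E R : Type*} [CommRing R] (src tgt : E → V) (wt : E → R)
    (a b : V) : R :=
  ∑ᶠ p : DPath src tgt a b, walkWt wt p.1

/-- Families of `k` pairwise vertex-disjoint paths `p i : a i → b i`. -/
def DisjPathFamily {V E : Type*} (src tgt : E → V) {k : ℕ} (a b : Fin k → V) : Type _ :=
  {p : (i : Fin k) → DPath src tgt (a i) (b i) //
    ∀ i j : Fin k, i ≠ j → ∀ v, v ∈ walkVerts tgt (a i) (p i).1 →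
      v ∉ walkVerts tgt (a j) (p j).1}

/-- `P_k(a,b)`: the sum of the weights of all families of pairwise vertex-disjoint paths. -/
noncomputable def pathFamilySum {V E R : Type*} [CommRing R] (src tgt : E → V) (wt : E → R)
    {k : ℕ} (a b : Fin k → V) : R :=
  ∑ᶠ p : DisjPathFamily src tgt a b, ∏ i : Fin k, walkWt wt ((p.1 i).1)

namespace LGVaux
variable {V E : Type*} {src tgt : E → V}

@[simp] lemma isWalk_nil {a b : V} : IsWalk src tgt [] a b ↔ a = b := Iff.rfl
@[simp] lemma isWalk_cons {e : E} {l : List E} {a b : V} :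
    IsWalk src tgt (e :: l) a b ↔ src e = a ∧ IsWalk src tgt l (tgt e) b := Iff.rfl

lemma isWalk_append {l1 l2 : List E} {a b : V} :
    IsWalk src tgt (l1 ++ l2) a b ↔ ∃ c, IsWalk src tgt l1 a c ∧ IsWalk src tgt l2 c b := by
  induction l1 generalizing a with
  | nil => simp
  | cons e l ih => simp [ih, and_assoc]

lemma walkVerts_append (a : V) (l1 l2 : List E) :
    walkVerts tgt a (l1 ++ l2) = walkVerts tgt a l1 ++ l2.map tgt := by
  simp [walkVerts]

lemma end_mem_walkVerts {l : List E} {a b : V} (h : IsWalk src tgt l a b) :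
    b ∈ walkVerts tgt a l := by
  induction l generalizing a with
  | nil => simp [walkVerts, h.symm]
  | cons e l ih =>
      obtain ⟨-, h2⟩ := h
      have := ih h2
      simp only [walkVerts, List.map_cons, List.mem_cons] at this ⊢
      tauto

lemma start_mem_walkVerts (a : V) (l : List E) : a ∈ walkVerts tgt a l := by
  simp [walkVerts]

lemma walk_end_unique {l : List E} {a b b' : V} (h : IsWalk src tgt l a b)
    (h' : IsWalk src tgt l a b') : b = b' := by
  induction l generalizing a with
  | nil => exact h.symm.trans h'
  | cons e l ih => exact ih h.2 h'.2

lemma end_mem_map_tgt {l : List E} {a b : V} (h : IsWalk src tgt l a b) (hl : l ≠ []) :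
    b ∈ l.map tgt := by
  induction l generalizing a with
  | nil => exact absurd rfl hl
  | cons e l ih =>
      rcases l with _ | ⟨e', l⟩
      · simp [h.2.symm]
      · have := ih h.2 (by simp)
        simp only [List.map_cons, List.mem_cons] at this ⊢
        tauto

lemma mem_split {l : List E} {a b v : V} (h : IsWalk src tgt l a b)
    (hv : v ∈ walkVerts tgt a l) :
    ∃ l1 l2, l = l1 ++ l2 ∧ IsWalk src tgt l1 a v ∧ IsWalk src tgt l2 v b := by
  induction l generalizing a with
  | nil =>
      simp only [walkVerts, List.map_nil, List.mem_singleton] at hv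
      exact ⟨[], [], rfl, hv.symm, hv ▸ h⟩
  | cons e l ih =>
      rcases List.mem_cons.1 hv with hva | hvl
      · exact ⟨[], e :: l, rfl, hva.symm, hva ▸ h⟩
      · obtain ⟨l1, l2, rfl, hw1, hw2⟩ := ih h.2 hvl
        exact ⟨e :: l1, l2, rfl, ⟨h.1, hw1⟩, hw2⟩

lemma nodup_of_acyclic (hacyclic : ∀ (a : V) (l : List E), IsWalk src tgt l a a → l = [])
    {l : List E} {a b : V} (h : IsWalk src tgt l a b) : (walkVerts tgt a l).Nodup := by
  induction l generalizing a with
  | nil => simp [walkVerts]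
  | cons e l ih =>
      have htail : (walkVerts tgt (tgt e) l).Nodup := ih h.2
      have hnot : a ∉ walkVerts tgt (tgt e) l := by
        intro hmem
        obtain ⟨l1, l2, rfl, hw1, -⟩ := mem_split h.2 hmem
        have : IsWalk src tgt (e :: l1) a a := ⟨h.1, hw1⟩
        simpa using hacyclic a (e :: l1) this
      have : walkVerts tgt a (e :: l) = a :: walkVerts tgt (tgt e) l := by simp [walkVerts]
      rw [this, List.nodup_cons]
      exact ⟨hnot, htail⟩

/-- First vertex on the walk satisfying `Q`, together with the split. -/
lemma first_split {l : List E} {a b : V} (h : IsWalk src tgt l a b) (Q : V → Prop)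
    (hQ : ∃ u ∈ walkVerts tgt a l, Q u) :
    ∃ v l1 l2, l = l1 ++ l2 ∧ IsWalk src tgt l1 a v ∧ Q v ∧
      ∀ u ∈ walkVerts tgt a l1, u ≠ v → ¬ Q u := by
  induction l generalizing a with
  | nil =>
      obtain ⟨u, hu, hQu⟩ := hQ
      simp only [walkVerts, List.map_nil, List.mem_singleton] at hu
      subst hu
      exact ⟨u, [], [], rfl, rfl, hQu, by simp [walkVerts]⟩
  | cons e l ih =>
      by_cases hQa : Q a
      · exact ⟨a, [], e :: l, rfl, rfl, hQa, by simp [walkVerts]⟩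
      · obtain ⟨u, hu, hQu⟩ := hQ
        have hu' : u ∈ walkVerts tgt (tgt e) l := by
          rcases List.mem_cons.1 hu with h1 | h1
          · exact absurd (h1 ▸ hQu) hQa
          · simpa [walkVerts] using h1
        obtain ⟨v, l1, l2, rfl, hw1, hQv, hmin⟩ := ih h.2 ⟨u, hu', hQu⟩
        refine ⟨v, e :: l1, l2, rfl, ⟨h.1, hw1⟩, hQv, ?_⟩
        intro w hw hwv
        rcases List.mem_cons.1 hw with h1 | h1
        · exact h1 ▸ hQa
        · exact hmin w (by simpa [walkVerts] using h1) hwv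


variable {V E : Type*} {src tgt : E → V}

lemma first_split_unique_aux {a v v' : V} {l1 l2 m1 m2 d : List E} {Q : V → Prop}
    (hnod : (walkVerts tgt a (l1 ++ l2)).Nodup)
    (hw1 : IsWalk src tgt l1 a v) (hQv : Q v)
    (hw1' : IsWalk src tgt m1 a v')
    (hmin' : ∀ u ∈ walkVerts tgt a m1, u ≠ v' → ¬ Q u)
    (hd : m1 = l1 ++ d) (he : l2 = d ++ m2) : d = [] := by
  by_contra hne
  obtain ⟨c, hc1, hc2⟩ := isWalk_append.1 (hd ▸ hw1')
  have hcv : c = v := walk_end_unique hc1 hw1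
  have hc2' : IsWalk src tgt d v v' := hcv ▸ hc2
  have hv'd : v' ∈ d.map tgt := end_mem_map_tgt hc2' hne
  have hvl1 : v ∈ walkVerts tgt a l1 := end_mem_walkVerts hw1
  have hdisj : (walkVerts tgt a l1).Disjoint (l2.map tgt) := by
    apply List.disjoint_of_nodup_append
    rwa [walkVerts_append] at hnod
  have hvv' : v ≠ v' := by
    rintro rfl
    exact hdisj hvl1 (by rw [he, List.map_append]; exact List.mem_append_left _ hv'd)
  exact hmin' v (by rw [hd, walkVerts_append]; exact List.mem_append_left _ hvl1) hvv' hQv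

lemma first_split_unique {a v v' : V} {l1 l2 m1 m2 : List E} {Q : V → Prop}
    (hnod : (walkVerts tgt a (l1 ++ l2)).Nodup)
    (hl : l1 ++ l2 = m1 ++ m2)
    (hw1 : IsWalk src tgt l1 a v) (hQv : Q v)
    (hmin : ∀ u ∈ walkVerts tgt a l1, u ≠ v → ¬ Q u)
    (hw1' : IsWalk src tgt m1 a v') (hQv' : Q v')
    (hmin' : ∀ u ∈ walkVerts tgt a m1, u ≠ v' → ¬ Q u) :
    v = v' ∧ l1 = m1 ∧ l2 = m2 := by
  rcases List.append_eq_append_iff.1 hl with ⟨d, hd, he⟩ | ⟨d, hd, he⟩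
  · have hdnil : d = [] := first_split_unique_aux hnod hw1 hQv hw1' hmin' hd he
    subst hdnil
    simp only [List.append_nil] at hd
    subst hd
    simp only [List.nil_append] at he
    exact ⟨walk_end_unique hw1 hw1', rfl, he⟩
  · have hnod' : (walkVerts tgt a (m1 ++ m2)).Nodup := hl ▸ hnod
    have hdnil : d = [] := first_split_unique_aux hnod' hw1' hQv' hw1 hmin hd he
    subst hdnil
    simp only [List.append_nil] at hd
    subst hd
    simp only [List.nil_append] at he
    exact ⟨walk_end_unique hw1 hw1', rfl, he.symm⟩

variable {V E : Type*} {src tgt : E → V}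

variable {k : ℕ} {a b : Fin k → V}

variable (src tgt a b) in
abbrev FamIdx : Type _ := Σ σ : Equiv.Perm (Fin k), ∀ i : Fin k, DPath src tgt (a i) (b (σ i))

def fverts (x : FamIdx src tgt a b) (m : Fin k) : List V := walkVerts tgt (a m) ((x.2 m).1)

def BadFam (x : FamIdx src tgt a b) : Prop :=
  ∃ m n, m ≠ n ∧ ∃ v, v ∈ fverts x m ∧ v ∈ fverts x n

lemma famIdx_ext {x y : FamIdx src tgt a b} (h1 : x.1 = y.1)
    (h2 : ∀ m, (x.2 m).1 = (y.2 m).1) : x = y := by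
  obtain ⟨σ, p⟩ := x; obtain ⟨τ, q⟩ := y
  dsimp only at h1
  subst h1
  simp only [Sigma.mk.inj_iff, heq_eq_eq, true_and]
  funext m
  exact Subtype.ext (h2 m)

lemma fverts_nodup (x : FamIdx src tgt a b) (m : Fin k) : (fverts x m).Nodup := (x.2 m).2.2

lemma fverts_walk (x : FamIdx src tgt a b) (m : Fin k) :
    IsWalk src tgt ((x.2 m).1) (a m) (b (x.1 m)) := (x.2 m).2.1

open scoped Classical

noncomputable def badSet (x : FamIdx src tgt a b) : Finset (Fin k) :=
  Finset.univ.filter (fun m => ∃ n, m ≠ n ∧ ∃ v, v ∈ fverts x m ∧ v ∈ fverts x n)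

lemma mem_badSet {x : FamIdx src tgt a b} {m : Fin k} :
    m ∈ badSet x ↔ ∃ n, m ≠ n ∧ ∃ v, v ∈ fverts x m ∧ v ∈ fverts x n := by
  simp [badSet]

lemma badSet_nonempty {x : FamIdx src tgt a b} (hx : BadFam x) : (badSet x).Nonempty := by
  obtain ⟨m, n, h, v, h1, h2⟩ := hx
  exact ⟨m, mem_badSet.2 ⟨n, h, v, h1, h2⟩⟩

noncomputable def idx1 (x : FamIdx src tgt a b) (hx : BadFam x) : Fin k :=
  (badSet x).min' (badSet_nonempty hx)

lemma idx1_mem (x : FamIdx src tgt a b) (hx : BadFam x) : idx1 x hx ∈ badSet x :=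
  Finset.min'_mem _ _

/-- `u` lies on some path other than the `i`-th. -/
def QShare (x : FamIdx src tgt a b) (i : Fin k) (u : V) : Prop :=
  ∃ n, n ≠ i ∧ u ∈ fverts x n

lemma exists_first (x : FamIdx src tgt a b) (hx : BadFam x) :
    ∃ t : V × List E × List E,
      ((x.2 (idx1 x hx)).1 = t.2.1 ++ t.2.2) ∧
      IsWalk src tgt t.2.1 (a (idx1 x hx)) t.1 ∧
      QShare x (idx1 x hx) t.1 ∧
      (∀ u ∈ walkVerts tgt (a (idx1 x hx)) t.2.1, u ≠ t.1 → ¬ QShare x (idx1 x hx) u) := by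
  obtain ⟨n, hni, v, hv1, hv2⟩ := mem_badSet.1 (idx1_mem x hx)
  obtain ⟨v', l1, l2, hsplit, hw, hQ, hmin⟩ :=
    first_split (fverts_walk x (idx1 x hx)) (QShare x (idx1 x hx))
      ⟨v, hv1, ⟨n, Ne.symm hni, hv2⟩⟩
  exact ⟨⟨v', l1, l2⟩, hsplit, hw, hQ, hmin⟩

noncomputable def fsplit (x : FamIdx src tgt a b) (hx : BadFam x) : V × List E × List E :=
  (exists_first x hx).choose

lemma fsplit_eq (x : FamIdx src tgt a b) (hx : BadFam x) :
    (x.2 (idx1 x hx)).1 = (fsplit x hx).2.1 ++ (fsplit x hx).2.2 :=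
  (exists_first x hx).choose_spec.1

lemma fsplit_walk (x : FamIdx src tgt a b) (hx : BadFam x) :
    IsWalk src tgt (fsplit x hx).2.1 (a (idx1 x hx)) (fsplit x hx).1 :=
  (exists_first x hx).choose_spec.2.1

lemma fsplit_Q (x : FamIdx src tgt a b) (hx : BadFam x) :
    QShare x (idx1 x hx) (fsplit x hx).1 :=
  (exists_first x hx).choose_spec.2.2.1

lemma fsplit_min (x : FamIdx src tgt a b) (hx : BadFam x) :
    ∀ u ∈ walkVerts tgt (a (idx1 x hx)) (fsplit x hx).2.1, u ≠ (fsplit x hx).1 →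
      ¬ QShare x (idx1 x hx) u :=
  (exists_first x hx).choose_spec.2.2.2

lemma fsplit_walk2 (x : FamIdx src tgt a b) (hx : BadFam x) :
    IsWalk src tgt (fsplit x hx).2.2 (fsplit x hx).1 (b (x.1 (idx1 x hx))) := by
  have h := fverts_walk x (idx1 x hx)
  rw [fsplit_eq x hx] at h
  obtain ⟨c, hc1, hc2⟩ := isWalk_append.1 h
  rwa [walk_end_unique hc1 (fsplit_walk x hx)] at hc2

noncomputable def idx2 (x : FamIdx src tgt a b) (hx : BadFam x) : Fin k :=
  (Finset.univ.filter (fun n => n ≠ idx1 x hx ∧ (fsplit x hx).1 ∈ fverts x n)).min'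
    (by obtain ⟨n, hn, hmem⟩ := fsplit_Q x hx; exact ⟨n, by simp [hn, hmem]⟩)

lemma idx2_spec (x : FamIdx src tgt a b) (hx : BadFam x) :
    idx2 x hx ≠ idx1 x hx ∧ (fsplit x hx).1 ∈ fverts x (idx2 x hx) := by
  have := Finset.min'_mem
    (Finset.univ.filter (fun n => n ≠ idx1 x hx ∧ (fsplit x hx).1 ∈ fverts x n))
    (by obtain ⟨n, hn, hmem⟩ := fsplit_Q x hx; exact ⟨n, by simp [hn, hmem]⟩)
  simpa [idx2] using this

lemma idx2_min (x : FamIdx src tgt a b) (hx : BadFam x) {n : Fin k}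
    (hn : n ≠ idx1 x hx) (hmem : (fsplit x hx).1 ∈ fverts x n) : idx2 x hx ≤ n :=
  Finset.min'_le _ _ (by simp [hn, hmem])

lemma exists_second (x : FamIdx src tgt a b) (hx : BadFam x) :
    ∃ t : List E × List E, ((x.2 (idx2 x hx)).1 = t.1 ++ t.2) ∧
      IsWalk src tgt t.1 (a (idx2 x hx)) (fsplit x hx).1 := by
  obtain ⟨l1, l2, hsplit, hw1, -⟩ := mem_split (fverts_walk x (idx2 x hx)) (idx2_spec x hx).2
  exact ⟨⟨l1, l2⟩, hsplit, hw1⟩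

noncomputable def ssplit (x : FamIdx src tgt a b) (hx : BadFam x) : List E × List E :=
  (exists_second x hx).choose

lemma ssplit_eq (x : FamIdx src tgt a b) (hx : BadFam x) :
    (x.2 (idx2 x hx)).1 = (ssplit x hx).1 ++ (ssplit x hx).2 :=
  (exists_second x hx).choose_spec.1

lemma ssplit_walk (x : FamIdx src tgt a b) (hx : BadFam x) :
    IsWalk src tgt (ssplit x hx).1 (a (idx2 x hx)) (fsplit x hx).1 :=
  (exists_second x hx).choose_spec.2

lemma ssplit_walk2 (x : FamIdx src tgt a b) (hx : BadFam x) :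
    IsWalk src tgt (ssplit x hx).2 (fsplit x hx).1 (b (x.1 (idx2 x hx))) := by
  have h := fverts_walk x (idx2 x hx)
  rw [ssplit_eq x hx] at h
  obtain ⟨c, hc1, hc2⟩ := isWalk_append.1 h
  rwa [walk_end_unique hc1 (ssplit_walk x hx)] at hc2

noncomputable def swapPerm (x : FamIdx src tgt a b) (hx : BadFam x) : Equiv.Perm (Fin k) :=
  x.1 * Equiv.swap (idx1 x hx) (idx2 x hx)

noncomputable def swapList (x : FamIdx src tgt a b) (hx : BadFam x) (m : Fin k) : List E :=
  if m = idx1 x hx then (fsplit x hx).2.1 ++ (ssplit x hx).2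
  else if m = idx2 x hx then (ssplit x hx).1 ++ (fsplit x hx).2.2
  else (x.2 m).1

lemma swapList_walk (x : FamIdx src tgt a b) (hx : BadFam x) (m : Fin k) :
    IsWalk src tgt (swapList x hx m) (a m) (b (swapPerm x hx m)) := by
  have hji := (idx2_spec x hx).1
  by_cases h1 : m = idx1 x hx
  · subst h1
    have : swapPerm x hx (idx1 x hx) = x.1 (idx2 x hx) := by
      simp [swapPerm, Equiv.Perm.mul_apply, Equiv.swap_apply_left]
    rw [this, swapList, if_pos rfl]
    exact isWalk_append.2 ⟨_, fsplit_walk x hx, ssplit_walk2 x hx⟩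
  · by_cases h2 : m = idx2 x hx
    · subst h2
      have : swapPerm x hx (idx2 x hx) = x.1 (idx1 x hx) := by
        simp [swapPerm, Equiv.Perm.mul_apply, Equiv.swap_apply_right]
      rw [this, swapList, if_neg h1, if_pos rfl]
      exact isWalk_append.2 ⟨_, ssplit_walk x hx, fsplit_walk2 x hx⟩
    · have : swapPerm x hx m = x.1 m := by
        simp [swapPerm, Equiv.Perm.mul_apply, Equiv.swap_apply_of_ne_of_ne h1 h2]
      rw [this, swapList, if_neg h1, if_neg h2]
      exact fverts_walk x m

noncomputable def swapFam (hacyclic : ∀ (a : V) (l : List E), IsWalk src tgt l a a → l = [])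
    (x : FamIdx src tgt a b) (hx : BadFam x) : FamIdx src tgt a b :=
  ⟨swapPerm x hx, fun m =>
    ⟨swapList x hx m, swapList_walk x hx m, nodup_of_acyclic hacyclic (swapList_walk x hx m)⟩⟩

section Swap

variable (hacyclic : ∀ (a : V) (l : List E), IsWalk src tgt l a a → l = [])
variable (x : FamIdx src tgt a b) (hx : BadFam x)

lemma idx_ne : idx1 x hx ≠ idx2 x hx := Ne.symm (idx2_spec x hx).1

lemma v_mem_l1 : (fsplit x hx).1 ∈ walkVerts tgt (a (idx1 x hx)) (fsplit x hx).2.1 :=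
  end_mem_walkVerts (fsplit_walk x hx)

lemma v_mem_m1 : (fsplit x hx).1 ∈ walkVerts tgt (a (idx2 x hx)) (ssplit x hx).1 :=
  end_mem_walkVerts (ssplit_walk x hx)

lemma fverts_i : fverts x (idx1 x hx) =
    walkVerts tgt (a (idx1 x hx)) (fsplit x hx).2.1 ++ (fsplit x hx).2.2.map tgt := by
  rw [fverts, fsplit_eq x hx, walkVerts_append]

lemma fverts_j : fverts x (idx2 x hx) =
    walkVerts tgt (a (idx2 x hx)) (ssplit x hx).1 ++ (ssplit x hx).2.map tgt := by
  rw [fverts, ssplit_eq x hx, walkVerts_append]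

lemma swapList_i : swapList x hx (idx1 x hx) = (fsplit x hx).2.1 ++ (ssplit x hx).2 := by
  rw [swapList, if_pos rfl]

lemma swapList_j : swapList x hx (idx2 x hx) = (ssplit x hx).1 ++ (fsplit x hx).2.2 := by
  rw [swapList, if_neg (idx2_spec x hx).1, if_pos rfl]

lemma swapList_off {m : Fin k} (h1 : m ≠ idx1 x hx) (h2 : m ≠ idx2 x hx) :
    swapList x hx m = (x.2 m).1 := by
  rw [swapList, if_neg h1, if_neg h2]

lemma fverts_swap (m : Fin k) :
    fverts (swapFam hacyclic x hx) m = walkVerts tgt (a m) (swapList x hx m) := rfl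

lemma fverts_swap_i : fverts (swapFam hacyclic x hx) (idx1 x hx) =
    walkVerts tgt (a (idx1 x hx)) (fsplit x hx).2.1 ++ (ssplit x hx).2.map tgt := by
  rw [fverts_swap, swapList_i, walkVerts_append]

lemma fverts_swap_j : fverts (swapFam hacyclic x hx) (idx2 x hx) =
    walkVerts tgt (a (idx2 x hx)) (ssplit x hx).1 ++ (fsplit x hx).2.2.map tgt := by
  rw [fverts_swap, swapList_j, walkVerts_append]

lemma fverts_swap_off {m : Fin k} (h1 : m ≠ idx1 x hx) (h2 : m ≠ idx2 x hx) :
    fverts (swapFam hacyclic x hx) m = fverts x m := by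
  rw [fverts_swap, swapList_off x hx h1 h2]; rfl

lemma v_mem_xi : (fsplit x hx).1 ∈ fverts x (idx1 x hx) := by
  rw [fverts_i]; exact List.mem_append_left _ (v_mem_l1 x hx)

lemma v_mem_xj : (fsplit x hx).1 ∈ fverts x (idx2 x hx) := (idx2_spec x hx).2

lemma v_mem_swap_i : (fsplit x hx).1 ∈ fverts (swapFam hacyclic x hx) (idx1 x hx) := by
  rw [fverts_swap_i]; exact List.mem_append_left _ (v_mem_l1 x hx)

lemma v_mem_swap_j : (fsplit x hx).1 ∈ fverts (swapFam hacyclic x hx) (idx2 x hx) := by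
  rw [fverts_swap_j]; exact List.mem_append_left _ (v_mem_m1 x hx)

lemma union_swap (u : V) :
    u ∈ fverts (swapFam hacyclic x hx) (idx1 x hx) ∨
      u ∈ fverts (swapFam hacyclic x hx) (idx2 x hx) ↔
    u ∈ fverts x (idx1 x hx) ∨ u ∈ fverts x (idx2 x hx) := by
  rw [fverts_swap_i, fverts_swap_j, fverts_i x hx, fverts_j x hx]
  simp only [List.mem_append]
  tauto

lemma bad_swap : BadFam (swapFam hacyclic x hx) :=
  ⟨idx1 x hx, idx2 x hx, idx_ne x hx, (fsplit x hx).1,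
    v_mem_swap_i hacyclic x hx, v_mem_swap_j hacyclic x hx⟩

lemma badSet_subset_of {x y : FamIdx src tgt a b} {i j : Fin k} (hij : i ≠ j)
    (hoff : ∀ m, m ≠ i → m ≠ j → fverts y m = fverts x m)
    (hun : ∀ u, u ∈ fverts y i ∨ u ∈ fverts y j ↔ u ∈ fverts x i ∨ u ∈ fverts x j)
    (hsh : ∃ u, u ∈ fverts y i ∧ u ∈ fverts y j) :
    badSet x ⊆ badSet y := by
  intro m hm
  obtain ⟨u0, hu0i, hu0j⟩ := hsh
  by_cases hmi : m = i
  · exact mem_badSet.2 ⟨j, hmi ▸ hij, u0, hmi ▸ hu0i, hu0j⟩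
  by_cases hmj : m = j
  · exact mem_badSet.2 ⟨i, hmj ▸ hij.symm, u0, hmj ▸ hu0j, hu0i⟩
  obtain ⟨n, hmn, u, hu1, hu2⟩ := mem_badSet.1 hm
  have hu1' : u ∈ fverts y m := (hoff m hmi hmj) ▸ hu1
  by_cases hni : n = i
  · rcases (hun u).2 (Or.inl (hni ▸ hu2)) with h | h
    · exact mem_badSet.2 ⟨i, hmi, u, hu1', h⟩
    · exact mem_badSet.2 ⟨j, hmj, u, hu1', h⟩
  by_cases hnj : n = j
  · rcases (hun u).2 (Or.inr (hnj ▸ hu2)) with h | h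
    · exact mem_badSet.2 ⟨i, hmi, u, hu1', h⟩
    · exact mem_badSet.2 ⟨j, hmj, u, hu1', h⟩
  · exact mem_badSet.2 ⟨n, hmn, u, hu1', (hoff n hni hnj) ▸ hu2⟩

lemma badSet_swap : badSet (swapFam hacyclic x hx) = badSet x := by
  apply Finset.Subset.antisymm
  · exact badSet_subset_of (idx_ne x hx)
      (fun m h1 h2 => (fverts_swap_off hacyclic x hx h1 h2).symm)
      (fun u => (union_swap hacyclic x hx u).symm)
      ⟨(fsplit x hx).1, v_mem_xi x hx, v_mem_xj x hx⟩
  · exact badSet_subset_of (idx_ne x hx)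
      (fun m h1 h2 => fverts_swap_off hacyclic x hx h1 h2)
      (fun u => union_swap hacyclic x hx u)
      ⟨(fsplit x hx).1, v_mem_swap_i hacyclic x hx, v_mem_swap_j hacyclic x hx⟩

lemma min'_congr {α : Type*} [LinearOrder α] {s t : Finset α} (h : s = t)
    (hs : s.Nonempty) (ht : t.Nonempty) : s.min' hs = t.min' ht := by subst h; rfl

variable (hx' : BadFam (swapFam hacyclic x hx))

lemma idx1_swap : idx1 (swapFam hacyclic x hx) hx' = idx1 x hx :=
  min'_congr (badSet_swap hacyclic x hx) _ _

lemma fsplit_swap : fsplit (swapFam hacyclic x hx) hx' =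
    ((fsplit x hx).1, (fsplit x hx).2.1, (ssplit x hx).2) := by
  set y := swapFam hacyclic x hx with hy
  have hi' : idx1 y hx' = idx1 x hx := idx1_swap hacyclic x hx hx'
  have hji : idx2 x hx ≠ idx1 x hx := (idx2_spec x hx).1
  have hnod : (walkVerts tgt (a (idx1 x hx)) ((fsplit x hx).2.1 ++ (ssplit x hx).2)).Nodup := by
    have := fverts_nodup y (idx1 x hx)
    rwa [fverts_swap, swapList_i] at this
  have hl : (fsplit x hx).2.1 ++ (ssplit x hx).2 =
      (fsplit y hx').2.1 ++ (fsplit y hx').2.2 := by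
    have := fsplit_eq y hx'
    rw [hi'] at this
    rw [← this, hy]
    exact (swapList_i x hx).symm
  have hmin : ∀ u ∈ walkVerts tgt (a (idx1 x hx)) (fsplit x hx).2.1,
      u ≠ (fsplit x hx).1 → ¬ QShare y (idx1 x hx) u := by
    intro u hu hne hQ
    obtain ⟨n, hni, hun⟩ := hQ
    by_cases hnj : n = idx2 x hx
    · rw [hnj, fverts_swap_j] at hun
      rcases List.mem_append.1 hun with h | h
      · refine fsplit_min x hx u hu hne ⟨idx2 x hx, hji, ?_⟩
        rw [fverts_j x hx]
        exact List.mem_append_left _ h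
      · have hnd := fverts_nodup x (idx1 x hx)
        rw [fverts_i x hx] at hnd
        exact List.disjoint_of_nodup_append hnd hu h
    · rw [fverts_swap_off hacyclic x hx hni hnj] at hun
      exact fsplit_min x hx u hu hne ⟨n, hni, hun⟩
  have hw1' := fsplit_walk y hx'
  have hQv' := fsplit_Q y hx'
  have hmin' := fsplit_min y hx'
  rw [hi'] at hw1' hQv' hmin'
  have := first_split_unique hnod hl (fsplit_walk x hx)
    (⟨idx2 x hx, hji, v_mem_swap_j hacyclic x hx⟩ : QShare y (idx1 x hx) (fsplit x hx).1)
    hmin hw1' hQv' hmin'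
  obtain ⟨h1, h2, h3⟩ := this
  have : fsplit y hx' = ((fsplit y hx').1, (fsplit y hx').2.1, (fsplit y hx').2.2) := rfl
  rw [this, ← h1, ← h2, ← h3]

lemma idx2_swap : idx2 (swapFam hacyclic x hx) hx' = idx2 x hx := by
  set y := swapFam hacyclic x hx with hy
  have hi' : idx1 y hx' = idx1 x hx := idx1_swap hacyclic x hx hx'
  have hv' : (fsplit y hx').1 = (fsplit x hx).1 := by rw [fsplit_swap hacyclic x hx hx']
  have hset : (Finset.univ.filter (fun n => n ≠ idx1 y hx' ∧ (fsplit y hx').1 ∈ fverts y n)) =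
      (Finset.univ.filter (fun n => n ≠ idx1 x hx ∧ (fsplit x hx).1 ∈ fverts x n)) := by
    ext n
    simp only [Finset.mem_filter, Finset.mem_univ, true_and, hi', hv']
    refine and_congr_right fun hni => ?_
    by_cases hnj : n = idx2 x hx
    · subst hnj
      simp only [iff_true_intro (v_mem_swap_j hacyclic x hx), iff_true_intro (v_mem_xj x hx)]
      exact iff_true_intro (v_mem_swap_j hacyclic x hx)
    · rw [fverts_swap_off hacyclic x hx hni hnj]
  exact min'_congr hset _ _

lemma ssplit_swap : ssplit (swapFam hacyclic x hx) hx' = ((ssplit x hx).1, (fsplit x hx).2.2) := by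
  set y := swapFam hacyclic x hx with hy
  have hj' : idx2 y hx' = idx2 x hx := idx2_swap hacyclic x hx hx'
  have hv' : (fsplit y hx').1 = (fsplit x hx).1 := by rw [fsplit_swap hacyclic x hx hx']
  have hnod : (walkVerts tgt (a (idx2 x hx)) ((ssplit x hx).1 ++ (fsplit x hx).2.2)).Nodup := by
    have := fverts_nodup y (idx2 x hx)
    rwa [fverts_swap, swapList_j] at this
  have hl : (ssplit x hx).1 ++ (fsplit x hx).2.2 = (ssplit y hx').1 ++ (ssplit y hx').2 := by
    have := ssplit_eq y hx'
    rw [hj'] at this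
    rw [← this, hy]
    exact (swapList_j x hx).symm
  have hw1' := ssplit_walk y hx'
  rw [hj', hv'] at hw1'
  have := first_split_unique (Q := fun u => u = (fsplit x hx).1) hnod hl
    (ssplit_walk x hx) rfl (fun u _ hne h => hne h) hw1' rfl (fun u _ hne h => hne h)
  obtain ⟨-, h2, h3⟩ := this
  have : ssplit y hx' = ((ssplit y hx').1, (ssplit y hx').2) := rfl
  rw [this, ← h2, ← h3]

lemma swapFam_involutive : swapFam hacyclic (swapFam hacyclic x hx) hx' = x := by
  set y := swapFam hacyclic x hx with hy
  have hi' : idx1 y hx' = idx1 x hx := idx1_swap hacyclic x hx hx'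
  have hj' : idx2 y hx' = idx2 x hx := idx2_swap hacyclic x hx hx'
  have hf' : fsplit y hx' = ((fsplit x hx).1, (fsplit x hx).2.1, (ssplit x hx).2) :=
    fsplit_swap hacyclic x hx hx'
  have hs' : ssplit y hx' = ((ssplit x hx).1, (fsplit x hx).2.2) :=
    ssplit_swap hacyclic x hx hx'
  apply famIdx_ext
  · show swapPerm y hx' = x.1
    rw [swapPerm, hi', hj']
    show (x.1 * Equiv.swap (idx1 x hx) (idx2 x hx)) * Equiv.swap (idx1 x hx) (idx2 x hx) = x.1
    rw [mul_assoc, Equiv.swap_mul_self, mul_one]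
  · intro m
    show swapList y hx' m = (x.2 m).1
    rw [swapList, hi', hj', hf', hs']
    by_cases h1 : m = idx1 x hx
    · rw [if_pos h1, h1, fsplit_eq x hx]
    · rw [if_neg h1]
      by_cases h2 : m = idx2 x hx
      · rw [if_pos h2, h2, ssplit_eq x hx]
      · rw [if_neg h2]
        show (y.2 m).1 = (x.2 m).1
        rw [hy]
        show swapList x hx m = (x.2 m).1
        exact swapList_off x hx h1 h2

lemma swapPerm_sign : Equiv.Perm.sign (swapPerm x hx) = - Equiv.Perm.sign x.1 := by
  rw [swapPerm, Equiv.Perm.sign_mul, Equiv.Perm.sign_swap (idx_ne x hx), mul_neg_one]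

lemma swapPerm_ne : swapPerm x hx ≠ x.1 := by
  intro h
  have h1 : x.1 * Equiv.swap (idx1 x hx) (idx2 x hx) = x.1 * 1 := by
    rw [mul_one]; exact h
  have h2 := mul_left_cancel h1
  exact idx_ne x hx (Equiv.swap_eq_one_iff.1 h2)

section Weight
variable {R : Type*} [CommRing R]

lemma walkWt_append (wt : E → R) (l l' : List E) :
    walkWt wt (l ++ l') = walkWt wt l * walkWt wt l' := by
  simp [walkWt]

lemma prod_eq_of_pair {ι : Type*} [Fintype ι] [DecidableEq ι] (f g : ι → R) {i j : ι}
    (hij : i ≠ j) (hoff : ∀ m, m ≠ i → m ≠ j → f m = g m) (hpair : f i * f j = g i * g j) :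
    ∏ m, f m = ∏ m, g m := by
  have hj : j ∈ Finset.univ.erase i := Finset.mem_erase.2 ⟨hij.symm, Finset.mem_univ j⟩
  rw [← Finset.mul_prod_erase Finset.univ f (Finset.mem_univ i),
    ← Finset.mul_prod_erase _ f hj,
    ← Finset.mul_prod_erase Finset.univ g (Finset.mem_univ i),
    ← Finset.mul_prod_erase _ g hj, ← mul_assoc, ← mul_assoc, hpair]
  congr 1
  apply Finset.prod_congr rfl
  intro m hm
  rw [Finset.mem_erase, Finset.mem_erase] at hm
  exact hoff m hm.2.1 hm.1

lemma prod_swapList (wt : E → R) :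
    ∏ m, walkWt wt (swapList x hx m) = ∏ m, walkWt wt ((x.2 m).1) := by
  apply prod_eq_of_pair _ _ (idx_ne x hx)
  · exact fun m h1 h2 => by rw [swapList_off x hx h1 h2]
  · rw [swapList_i, swapList_j, fsplit_eq x hx, ssplit_eq x hx]
    simp only [walkWt_append]
    ring

end Weight
end Swap
end LGVaux

/-- **Lindström's lemma** (Lindström–Gessel–Viennot).  In a finite weighted acyclic
directed graph, `Σ_σ sgn(σ) P_k(a, b_σ) = det (P(a_i, b_j))`. -/
theorem lindstrom {V E R : Type*} [Fintype V] [Fintype E] [CommRing R]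
    (src tgt : E → V) (wt : E → R)
    (hacyclic : ∀ (a : V) (l : List E), IsWalk src tgt l a a → l = [])
    (k : ℕ) (a b : Fin k → V) :
    ∑ σ : Equiv.Perm (Fin k),
        (Equiv.Perm.sign σ : ℤ) • pathFamilySum src tgt wt a (b ∘ σ) =
      Matrix.det (Matrix.of fun i j : Fin k => pathSum src tgt wt (a i) (b j)) := by
  classical
  haveI hfinD : ∀ (u v : V), Finite (DPath src tgt u v) := by
    intro u v
    apply Finite.of_injective (fun p : DPath src tgt u v =>
      (⟨p.1, List.Nodup.of_map tgt (List.nodup_cons.1 p.2.2).2⟩ : {l : List E // l.Nodup}))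
    intro p q h
    rw [Subtype.mk.injEq] at h
    exact Subtype.ext h
  haveI hftD : ∀ (u v : V), Fintype (DPath src tgt u v) := fun u v => Fintype.ofFinite _
  -- expand the determinant
  rw [← Matrix.det_transpose, Matrix.det_apply']
  simp only [Matrix.transpose_apply, Matrix.of_apply]
  -- expand pathSum
  have hps : ∀ u v : V, pathSum src tgt wt u v = ∑ p : DPath src tgt u v, walkWt wt p.1 :=
    fun u v => finsum_eq_sum_of_fintype _
  simp only [hps]
  have hprod : ∀ σ : Equiv.Perm (Fin k),
      (∏ i, ∑ p : DPath src tgt (a i) (b (σ i)), walkWt wt p.1) =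
        ∑ p : (∀ i, DPath src tgt (a i) (b (σ i))), ∏ i, walkWt wt (p i).1 := by
    intro σ
    rw [Finset.prod_univ_sum, Fintype.piFinset_univ]
  simp only [hprod]
  -- expand pathFamilySum
  have hfam : ∀ σ : Equiv.Perm (Fin k), pathFamilySum src tgt wt a (b ∘ σ) =
      ∑ p ∈ Finset.univ.filter (fun p : ∀ i, DPath src tgt (a i) (b (σ i)) =>
          ¬ LGVaux.BadFam (⟨σ, p⟩ : LGVaux.FamIdx src tgt a b)),
        ∏ i, walkWt wt (p i).1 := by
    intro σ
    haveI : Fintype (DisjPathFamily src tgt a (b ∘ σ)) := by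
      unfold DisjPathFamily; infer_instance
    have h0 : pathFamilySum src tgt wt a (b ∘ σ) =
        ∑ q : DisjPathFamily src tgt a (b ∘ σ), ∏ i, walkWt wt ((q.1 i)).1 :=
      finsum_eq_sum_of_fintype _
    rw [h0]
    have hj : ∀ p : ∀ i, DPath src tgt (a i) (b (σ i)),
        ¬ LGVaux.BadFam (⟨σ, p⟩ : LGVaux.FamIdx src tgt a b) →
        ∀ i j : Fin k, i ≠ j → ∀ v, v ∈ walkVerts tgt (a i) (p i).1 →
          v ∉ walkVerts tgt (a j) (p j).1 :=
      fun p hp i j hij v h1 h2 => hp ⟨i, j, hij, v, h1, h2⟩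
    exact Finset.sum_bij' (fun (q : DisjPathFamily src tgt a (b ∘ σ)) _ =>
        (q.1 : ∀ i, DPath src tgt (a i) (b (σ i))))
      (fun p hp => (⟨p, hj p (Finset.mem_filter.1 hp).2⟩ :
        DisjPathFamily src tgt a (b ∘ σ)))
      (fun q _ => Finset.mem_filter.2 ⟨Finset.mem_univ _, fun hb => by
        obtain ⟨m, n, hmn, v, h1, h2⟩ := hb
        exact q.2 m n hmn v h1 h2⟩)
      (fun p _ => Finset.mem_univ _)
      (fun q _ => rfl) (fun p _ => rfl) (fun q _ => rfl)
  simp only [hfam]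
  simp only [zsmul_eq_mul]
  -- split the full sums into disjoint and intersecting parts
  have hsplit : ∀ σ : Equiv.Perm (Fin k),
      (∑ p : (∀ i, DPath src tgt (a i) (b (σ i))), ∏ i, walkWt wt (p i).1) =
      (∑ p ∈ Finset.univ.filter (fun p : ∀ i, DPath src tgt (a i) (b (σ i)) =>
          LGVaux.BadFam (⟨σ, p⟩ : LGVaux.FamIdx src tgt a b)), ∏ i, walkWt wt (p i).1) +
      (∑ p ∈ Finset.univ.filter (fun p : ∀ i, DPath src tgt (a i) (b (σ i)) =>
          ¬ LGVaux.BadFam (⟨σ, p⟩ : LGVaux.FamIdx src tgt a b)), ∏ i, walkWt wt (p i).1) := by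
    intro σ
    rw [Finset.sum_filter_add_sum_filter_not]
  simp only [hsplit, mul_add]
  rw [Finset.sum_add_distrib]
  have hkey : ∑ σ : Equiv.Perm (Fin k), (((Equiv.Perm.sign σ : ℤ) : R) *
      ∑ p ∈ Finset.univ.filter (fun p : ∀ i, DPath src tgt (a i) (b (σ i)) =>
          LGVaux.BadFam (⟨σ, p⟩ : LGVaux.FamIdx src tgt a b)), ∏ i, walkWt wt (p i).1) = 0 := by
    simp only [Finset.mul_sum]
    rw [Finset.sum_sigma' (Finset.univ : Finset (Equiv.Perm (Fin k))) _
      (fun σ (p : ∀ i, DPath src tgt (a i) (b (σ i))) =>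
        ((Equiv.Perm.sign σ : ℤ) : R) * ∏ i, walkWt wt ((p i)).1)]
    set s := Finset.univ.sigma (fun σ : Equiv.Perm (Fin k) =>
      Finset.univ.filter (fun p : ∀ i, DPath src tgt (a i) (b (σ i)) =>
        LGVaux.BadFam (⟨σ, p⟩ : LGVaux.FamIdx src tgt a b))) with hs
    have hmem : ∀ x : LGVaux.FamIdx src tgt a b, x ∈ s → LGVaux.BadFam x := by
      intro x hx
      have := (Finset.mem_filter.1 (Finset.mem_sigma.1 hx).2).2
      rwa [Sigma.eta] at this
    apply Finset.sum_involution
      (g := fun x hx => LGVaux.swapFam hacyclic x (hmem x hx))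
    · intro x hx
      have hb := hmem x hx
      have h1 : ((Equiv.Perm.sign (LGVaux.swapFam hacyclic x hb).1 : ℤ) : R) =
          -((Equiv.Perm.sign x.1 : ℤ) : R) := by
        have : (LGVaux.swapFam hacyclic x hb).1 = LGVaux.swapPerm x hb := rfl
        rw [this, LGVaux.swapPerm_sign, Units.val_neg, Int.cast_neg]
      have h2 : (∏ i, walkWt wt (((LGVaux.swapFam hacyclic x hb).2 i)).1) =
          ∏ i, walkWt wt ((x.2 i)).1 := LGVaux.prod_swapList x hb wt
      rw [h1, h2]
      ring
    · intro x hx _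
      intro h
      exact LGVaux.swapPerm_ne x (hmem x hx) (congrArg Sigma.fst h)
    · intro x hx
      exact LGVaux.swapFam_involutive hacyclic x (hmem x hx) _
    · intro x hx
      rw [hs]
      refine Finset.mem_sigma.2 ⟨Finset.mem_univ _, Finset.mem_filter.2 ⟨Finset.mem_univ _, ?_⟩⟩
      have := LGVaux.bad_swap hacyclic x (hmem x hx)
      rwa [← Sigma.eta (LGVaux.swapFam hacyclic x (hmem x hx))] at this
  rw [hkey, zero_add]
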